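/- Let z₁,z₂,z₃ ∈ ℝ^d with η ≤ ‖z₁‖, let v₂ = σ(z₁ᵀ(z₃-z₂)) with σ the sigmoid, and suppose v₂‖z₁‖ ≤ ε with 0 < ε < η/2. Then log(1 + exp(z₁ᵀ(z₃-z₂))) ≤ 2ε/η. -/

import Mathlib

theorem small_gradient_implies_small_loss
    (d : ℕ) (z₁ z₂ z₃ : EuclideanSpace ℝ (Fin d)) (η ε : ℝ)
    (hη : η ≤ ‖z₁‖) (hε : 0 < ε) (hεη : ε < η / 2)
    (hgrad : (1 / (1 + Real.exp (-(inner ℝ z₁ (z₃ - z₂) : ℝ)))) * ‖z₁‖ ≤ ε) :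
    Real.log (1 + Real.exp (inner ℝ z₁ (z₃ - z₂) : ℝ)) ≤ 2 * ε / η := by
  set t : ℝ := (inner ℝ z₁ (z₃ - z₂) : ℝ) with ht
  have hηpos : 0 < η := lt_trans hε hεη |>.trans_le (by linarith)
  have hexp : (0:ℝ) < Real.exp (-t) := Real.exp_pos _
  have hden : (0:ℝ) < 1 + Real.exp (-t) := by linarith
  set s : ℝ := 1 / (1 + Real.exp (-t)) with hs
  have hspos : 0 < s := by positivity
  have hsle : s ≤ ε / η := by
    rw [le_div_iff₀ hηpos]
    nlinarith [mul_le_mul_of_nonneg_left hη hspos.le]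
  have hshalf : s < 1 / 2 := lt_of_le_of_lt hsle (by rw [div_lt_div_iff₀ hηpos (by norm_num : (0:ℝ)<2)]; linarith)
  -- e^t = s / (1 - s)
  have hets : Real.exp t * (1 - s) = s := by
    rw [hs]
    field_simp
    rw [add_sub_cancel_left, ← Real.exp_add]
    ring_nf
    simp
  have h1s : (1:ℝ)/2 < 1 - s := by linarith
  have het : Real.exp t ≤ 2 * (ε / η) := by
    have : Real.exp t * (1/2) ≤ Real.exp t * (1 - s) :=
      mul_le_mul_of_nonneg_left h1s.le (Real.exp_pos t).le
    nlinarith [Real.exp_pos t]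
  calc Real.log (1 + Real.exp t) ≤ (1 + Real.exp t) - 1 :=
        Real.log_le_sub_one_of_pos (by positivity)
    _ = Real.exp t := by ring
    _ ≤ 2 * ε / η := by rw [mul_div_assoc]; exact het
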